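/- Let E, E' be subspaces of a Banach space B, both of finite dimension k, and let F be a closed complement to E with |π_{E⊕F}| ≤ √k. Suppose d_H(E, E') ≤ 1/(2√k). Then: (a) B = E' ⊕ F, with |π_{E'⊕F}| ≤ 2√k and |π_{F⊕E'}|_E| ≤ 4√k · d_H(E, E'); and (b) for any e ∈ E with |e| = 1, one has 1 − 4√k · d_H(E, E') ≤ |π_{E'⊕F} e| ≤ 1 + 4√k · d_H(E, E'). -/

import Mathlib

open MeasureTheory Filter Metric Module Submodule Set

noncomputable section

namespace BY

variable {B B' : Type*}

/-- The unit sphere of a subspace `E`. -/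
def subSphere [NormedAddCommGroup B] [NormedSpace ℝ B] (E : Submodule ℝ B) : Set B :=
  {v : B | v ∈ E ∧ ‖v‖ = 1}

/-- `d_H(E, E')`: the Hausdorff distance between the unit spheres of `E` and `E'`. -/
def dH [NormedAddCommGroup B] [NormedSpace ℝ B] (E E' : Submodule ℝ B) : ℝ :=
  Metric.hausdorffDist (subSphere E) (subSphere E')

/-- The supremum of `‖π x‖` over `x ∈ S`, where `π` is the projection onto `E` along `F`. -/
def projNormOn [NormedAddCommGroup B] [NormedSpace ℝ B] (E F : Submodule ℝ B)
    (h : IsCompl E F) (S : Set B) : ℝ :=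
  sSup ((fun x => ‖(E.linearProjOfIsCompl F h x : B)‖) '' S)

/-- `|π_{E⊕F}|`: the operator norm of the projection onto `E` along `F`. -/
def projNorm [NormedAddCommGroup B] [NormedSpace ℝ B] (E F : Submodule ℝ B)
    (h : IsCompl E F) : ℝ :=
  projNormOn E F h (Metric.closedBall 0 1)

/-- `α(E, F) = inf { ‖e - f‖ : e ∈ E, ‖e‖ = 1, f ∈ F }`. -/
def alphaAngle [NormedAddCommGroup B] [NormedSpace ℝ B] (E F : Submodule ℝ B) : ℝ :=
  sInf {r : ℝ | ∃ e ∈ E, ∃ f ∈ F, ‖e‖ = 1 ∧ r = ‖e - f‖}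

/-- `ω_k`: the volume of the Euclidean unit ball in `ℝ^k`. -/
def euclideanBallVol (k : ℕ) : ENNReal :=
  volume (Metric.closedBall (0 : EuclideanSpace ℝ (Fin k)) 1)

/-- `μ` is the induced volume `m_E` on the `k`-dimensional subspace `E`: the (unique) Haar
measure on `E` assigning mass `ω_k` to the unit ball of `E`. -/
def IsInducedVolume [NormedAddCommGroup B] [NormedSpace ℝ B] [MeasurableSpace B]
    (E : Submodule ℝ B) (k : ℕ) (μ : Measure E) : Prop :=
  Measure.IsAddHaarMeasure μ ∧ μ {v : E | ‖v‖ ≤ 1} = euclideanBallVol k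

/-- `det(A|E)`, computed with respect to induced volumes `μE` on `E` and `μF` on a
subspace `F` containing `A(E)`: the ratio `μF(A(B_E)) / μE(B_E)` where `B_E` is
the unit ball of `E`. -/
def detIn [NormedAddCommGroup B] [NormedSpace ℝ B] [NormedAddCommGroup B'] [NormedSpace ℝ B']
    [MeasurableSpace B] [MeasurableSpace B']
    (A : B →L[ℝ] B') (E : Submodule ℝ B) (F : Submodule ℝ B')
    (μE : Measure E) (μF : Measure F) : ℝ :=
  (μF {w : F | ∃ v : B, v ∈ E ∧ ‖v‖ ≤ 1 ∧ A v = (w : B')}).toReal /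
    (μE {v : E | ‖v‖ ≤ 1}).toReal

/-- `P[v₁, …, v_k]`: the parallelepiped spanned by the vectors `v i`. -/
def pped [AddCommGroup B] [Module ℝ B] {k : ℕ} (v : Fin k → B) : Set B :=
  {x : B | ∃ a : Fin k → ℝ, (∀ i, a i ∈ Set.Icc (0 : ℝ) 1) ∧ x = ∑ i, a i • v i}

/-- `N[v₁, …, v_k]`: the sum of the norms of the projections, within the span of the `v i`,
onto each `⟨v i⟩` along the span of the other basis vectors. -/
def Nquan [NormedAddCommGroup B] [NormedSpace ℝ B] {k : ℕ} (v : Fin k → B) : ℝ :=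
  ∑ i, sSup {r : ℝ | ∃ a : Fin k → ℝ, ‖∑ j, a j • v j‖ ≤ 1 ∧ r = ‖a i • v i‖}

/-- The operator norm of the restriction of `A` to the subspace `E`. -/
def opNormOnSub [NormedAddCommGroup B] [NormedSpace ℝ B] [NormedAddCommGroup B']
    [NormedSpace ℝ B'] (A : B →L[ℝ] B') (E : Submodule ℝ B) : ℝ :=
  sSup {r : ℝ | ∃ v ∈ E, ‖v‖ ≤ 1 ∧ r = ‖A v‖}

/-- The `n`-th iterate (`n ∈ ℤ`) of the invertible pair `(f, g)`, `g = f⁻¹`. -/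
def zIter {X : Type*} (f g : X → X) (n : ℤ) (x : X) : X :=
  if 0 ≤ n then f^[n.toNat] x else g^[(-n).toNat] x

/-- `ψ'(x) = sup_{n ∈ ℤ} e^{-|n| δ} ψ(f^n x)`. -/
def psiSup {X : Type*} (f g : X → X) (ψ : X → ℝ) (δ : ℝ) (x : X) : ℝ :=
  sSup (Set.range fun n : ℤ => Real.exp (-|(n : ℝ)| * δ) * ψ (zIter f g n x))

/-- The cocycle `T^n_x = T_{f^{n-1} x} ∘ ⋯ ∘ T_x`. -/
def cocycle {X : Type*} [NormedAddCommGroup B] [NormedSpace ℝ B]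
    (f : X → X) (T : X → B →L[ℝ] B) : ℕ → X → B →L[ℝ] B
  | 0, _ => ContinuousLinearMap.id ℝ B
  | n + 1, x => (cocycle f T n (f x)).comp (T x)

end BY

end

section Aux
variable {B : Type*} [NormedAddCommGroup B] [NormedSpace ℝ B]

lemma aux_scale_upper (q : B →ₗ[ℝ] B) (S : Submodule ℝ B) {c : ℝ}
    (h1 : ∀ v ∈ S, ‖v‖ = 1 → ‖q v‖ ≤ c) :
    ∀ v ∈ S, ‖q v‖ ≤ c * ‖v‖ := by
  intro v hv
  rcases eq_or_ne v 0 with rfl | hv0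
  · simp
  · have hn : 0 < ‖v‖ := norm_pos_iff.mpr hv0
    have hu : ‖(‖v‖⁻¹ • v)‖ = 1 := by
      rw [norm_smul, norm_inv, norm_norm, inv_mul_cancel₀ hn.ne']
    have h2 := h1 _ (S.smul_mem _ hv) hu
    rw [_root_.map_smul, norm_smul, norm_inv, norm_norm] at h2
    calc ‖q v‖ = ‖v‖ * (‖v‖⁻¹ * ‖q v‖) := by field_simp
    _ ≤ ‖v‖ * c := mul_le_mul_of_nonneg_left h2 hn.le
    _ = c * ‖v‖ := mul_comm _ _

lemma aux_scale_lower (q : B →ₗ[ℝ] B) (S : Submodule ℝ B) {c : ℝ}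
    (h1 : ∀ v ∈ S, ‖v‖ = 1 → c ≤ ‖q v‖) :
    ∀ v ∈ S, c * ‖v‖ ≤ ‖q v‖ := by
  intro v hv
  rcases eq_or_ne v 0 with rfl | hv0
  · simp
  · have hn : 0 < ‖v‖ := norm_pos_iff.mpr hv0
    have hu : ‖(‖v‖⁻¹ • v)‖ = 1 := by
      rw [norm_smul, norm_inv, norm_norm, inv_mul_cancel₀ hn.ne']
    have h2 := h1 _ (S.smul_mem _ hv) hu
    rw [_root_.map_smul, norm_smul, norm_inv, norm_norm] at h2
    calc c * ‖v‖ ≤ (‖v‖⁻¹ * ‖q v‖) * ‖v‖ := mul_le_mul_of_nonneg_right h2 hn.le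
    _ = ‖q v‖ := by field_simp

lemma aux_subSphere_compact (G : Submodule ℝ B) [FiniteDimensional ℝ G] :
    IsCompact (BY.subSphere G) := by
  have : BY.subSphere G = Subtype.val '' (Metric.sphere (0 : G) 1) := by
    ext v
    constructor
    · rintro ⟨hvG, hv1⟩
      exact ⟨⟨v, hvG⟩, by simpa [mem_sphere_iff_norm] using hv1, rfl⟩
    · rintro ⟨w, hw, rfl⟩
      exact ⟨w.2, by simpa [mem_sphere_iff_norm] using hw⟩
  rw [this]
  exact (isCompact_sphere 0 1).image continuous_subtype_val

lemma aux_subSphere_nonempty (G : Submodule ℝ B) (hG : G ≠ ⊥) :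
    (BY.subSphere G).Nonempty := by
  obtain ⟨v, hvG, hv0⟩ := Submodule.exists_mem_ne_zero_of_ne_bot hG
  have hn : 0 < ‖v‖ := norm_pos_iff.mpr hv0
  exact ⟨‖v‖⁻¹ • v, G.smul_mem _ hvG, by
    rw [norm_smul, norm_inv, norm_norm, inv_mul_cancel₀ hn.ne']⟩

lemma aux_subSphere_bounded (G : Submodule ℝ B) :
    Bornology.IsBounded (BY.subSphere G) := by
  refine (Metric.isBounded_closedBall (x := (0 : B)) (r := 1)).subset ?_
  rintro v ⟨-, hv⟩
  simp [Metric.mem_closedBall, dist_eq_norm, hv]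

lemma aux_norm_add_lower (e x : B) : ‖e‖ - ‖x‖ ≤ ‖e + x‖ := by
  have h1 := norm_sub_norm_le e (e + x)
  have h2 : ‖e - (e + x)‖ = ‖x‖ := by
    rw [show e - (e + x) = -x by abel, norm_neg]
  linarith

end Aux

set_option maxHeartbeats 1000000 in
set_option synthInstance.maxHeartbeats 400000 in
/-- Lemma 2.5 of the paper. Let `E, E'` be `k`-dimensional subspaces of a
Banach space `B` and `F` a closed complement of `E` with `|π_{E⊕F}| ≤ √k`. If
`d_H(E, E') ≤ 1/(2√k)`, then (a) `B = E' ⊕ F` with `|π_{E'⊕F}| ≤ 2√k` and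
`|π_{F⊕E'}|_E| ≤ 4√k d_H(E, E')`, and (b) for every unit vector `e ∈ E`,
`1 - 4√k d_H(E,E') ≤ |π_{E'⊕F} e| ≤ 1 + 4√k d_H(E,E')`. -/
theorem statement2 {B : Type*} [NormedAddCommGroup B] [NormedSpace ℝ B] [CompleteSpace B]
    (k : ℕ) (hk : 1 ≤ k) (E E' F : Submodule ℝ B)
    [FiniteDimensional ℝ E] [FiniteDimensional ℝ E']
    (hEk : Module.finrank ℝ E = k) (hE'k : Module.finrank ℝ E' = k)
    (hFc : IsClosed (F : Set B)) (h : IsCompl E F)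
    (hproj : BY.projNorm E F h ≤ Real.sqrt k)
    (hd : BY.dH E E' ≤ 1 / (2 * Real.sqrt k)) :
    ∃ h' : IsCompl E' F,
      BY.projNorm E' F h' ≤ 2 * Real.sqrt k ∧
      BY.projNormOn F E' h'.symm {v : B | v ∈ E ∧ ‖v‖ ≤ 1} ≤ 4 * Real.sqrt k * BY.dH E E' ∧
      ∀ e ∈ E, ‖e‖ = 1 →
        1 - 4 * Real.sqrt k * BY.dH E E' ≤ ‖(E'.linearProjOfIsCompl F h' e : B)‖ ∧
        ‖(E'.linearProjOfIsCompl F h' e : B)‖ ≤ 1 + 4 * Real.sqrt k * BY.dH E E' := by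
  classical
  set C := Real.sqrt k with hCdef
  have hC1 : 1 ≤ C := by
    rw [hCdef]
    have h1 : (1 : ℝ) ≤ (k : ℝ) := by exact_mod_cast hk
    nlinarith [Real.sq_sqrt (by positivity : (0:ℝ) ≤ (k:ℝ)), Real.sqrt_nonneg (k:ℝ)]
  have hC0 : 0 < C := lt_of_lt_of_le one_pos hC1
  set d := BY.dH E E' with hddef
  have hd0 : 0 ≤ d := Metric.hausdorffDist_nonneg
  have hCd : C * d ≤ 1 / 2 := by
    have h1 := mul_le_mul_of_nonneg_left hd hC0.le
    calc C * d ≤ C * (1 / (2 * C)) := h1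
      _ = 1 / 2 := by field_simp
  set p : B →ₗ[ℝ] E := E.linearProjOfIsCompl F h with hpdef
  have hEclosed : IsClosed (E : Set B) := Submodule.closed_of_finiteDimensional E
  set πc : B →L[ℝ] E := E.linearProjOfClosedCompl F h hEclosed hFc with hπcdef
  have hπcp : ∀ x : B, πc x = p x := fun x => by rw [hπcdef, hpdef]; rfl
  set pB : B →ₗ[ℝ] B := E.subtype ∘ₗ p with hpBdef
  have hpBapp : ∀ x : B, pB x = (p x : B) := fun x => rfl
  -- pointwise bound for p from hproj
  unfold BY.projNorm BY.projNormOn at hproj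
  have hπ1 : ∀ v ∈ (⊤ : Submodule ℝ B), ‖v‖ = 1 → ‖pB v‖ ≤ C := by
    intro x _ hx
    have hmem : ‖pB x‖ ∈ (fun x => ‖(E.linearProjOfIsCompl F h x : B)‖) '' Metric.closedBall 0 1 :=
      ⟨x, by simpa [Metric.mem_closedBall, dist_eq_norm] using hx.le, rfl⟩
    have hbdd : BddAbove ((fun x => ‖(E.linearProjOfIsCompl F h x : B)‖) '' Metric.closedBall 0 1) := by
      refine ⟨‖πc‖, ?_⟩
      rintro r ⟨y, hy, rfl⟩
      show ‖(p y : B)‖ ≤ ‖πc‖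
      have h1 : ‖(p y : B)‖ = ‖πc y‖ := by rw [hπcp y]; rfl
      have h2 : ‖πc y‖ ≤ ‖πc‖ * ‖y‖ := πc.le_opNorm y
      have h3 : ‖y‖ ≤ 1 := by simpa [Metric.mem_closedBall, dist_eq_norm] using hy
      have h4 : ‖πc‖ * ‖y‖ ≤ ‖πc‖ * 1 :=
        mul_le_mul_of_nonneg_left h3 (ContinuousLinearMap.opNorm_nonneg πc)
      rw [h1]; linarith
    exact le_trans (le_csSup hbdd hmem) hproj
  have hπ : ∀ x : B, ‖pB x‖ ≤ C * ‖x‖ :=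
    fun x => aux_scale_upper pB ⊤ hπ1 x trivial
  -- Hausdorff distance facts
  have hEne : (BY.subSphere E).Nonempty := by
    refine aux_subSphere_nonempty E ?_
    intro hbot
    rw [hbot, finrank_bot] at hEk
    omega
  have hE'ne : (BY.subSphere E').Nonempty := by
    refine aux_subSphere_nonempty E' ?_
    intro hbot
    rw [hbot, finrank_bot] at hE'k
    omega
  have hedist : EMetric.hausdorffEdist (BY.subSphere E) (BY.subSphere E') ≠ ⊤ :=
    Metric.hausdorffEdist_ne_top_of_nonempty_of_bounded hEne hE'ne
      (aux_subSphere_bounded E) (aux_subSphere_bounded E')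
  have nearE : ∀ v ∈ BY.subSphere E', ∃ e ∈ BY.subSphere E, ‖v - e‖ ≤ d := by
    intro v hv
    have h1 : Metric.infDist v (BY.subSphere E) ≤ d := by
      have h2 := Metric.infDist_le_hausdorffDist_of_mem (t := BY.subSphere E) hv
        ((by rw [EMetric.hausdorffEdist_comm]; exact hedist))
      calc Metric.infDist v (BY.subSphere E)
          ≤ Metric.hausdorffDist (BY.subSphere E') (BY.subSphere E) := h2
        _ = d := by rw [hddef, BY.dH, Metric.hausdorffDist_comm]
    obtain ⟨e, he, heq⟩ := (aux_subSphere_compact E).exists_infDist_eq_dist hEne v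
    exact ⟨e, he, by rw [← dist_eq_norm]; rw [heq] at h1; exact h1⟩
  have nearE' : ∀ v ∈ BY.subSphere E, ∃ e ∈ BY.subSphere E', ‖v - e‖ ≤ d := by
    intro v hv
    have h1 : Metric.infDist v (BY.subSphere E') ≤ d :=
      Metric.infDist_le_hausdorffDist_of_mem hv hedist
    obtain ⟨e, he, heq⟩ := (aux_subSphere_compact E').exists_infDist_eq_dist hE'ne v
    exact ⟨e, he, by rw [← dist_eq_norm]; rw [heq] at h1; exact h1⟩
  -- lower bound: for v ∈ E', ‖v‖/2 ≤ ‖pB v‖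
  have hlow1 : ∀ v ∈ E', ‖v‖ = 1 → (1:ℝ)/2 ≤ ‖pB v‖ := by
    intro v hv hv1
    obtain ⟨e, ⟨heE, he1⟩, hclose⟩ := nearE v ⟨hv, hv1⟩
    have hpe : pB e = e := by
      rw [hpBdef]
      simp only [LinearMap.comp_apply, Submodule.subtype_apply, hpdef]
      rw [show e = ((⟨e, heE⟩ : E) : B) from rfl]
      exact congrArg Subtype.val (Submodule.projectionOnto_apply_left h ⟨e, heE⟩)
    have hsplit : pB v = e + pB (v - e) := by
      conv_lhs => rw [show v = e + (v - e) by abel]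
      rw [map_add, hpe]
    have h2 : ‖pB (v - e)‖ ≤ C * d :=
      le_trans (hπ _) (mul_le_mul_of_nonneg_left hclose hC0.le)
    have h3 : ‖e‖ - ‖pB (v - e)‖ ≤ ‖pB v‖ := hsplit ▸ aux_norm_add_lower e _
    rw [he1] at h3
    linarith
  have hlow : ∀ v ∈ E', (1:ℝ)/2 * ‖v‖ ≤ ‖pB v‖ := aux_scale_lower pB E' hlow1
  -- q : E' ≃ E
  set q : E' →ₗ[ℝ] E := p ∘ₗ E'.subtype with hqdef
  have hqapp : ∀ x : E', (q x : B) = pB (x : B) := fun x => rfl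
  have hqinj : Function.Injective q := by
    rw [← LinearMap.ker_eq_bot, LinearMap.ker_eq_bot']
    intro m hm
    have h1 : (1:ℝ)/2 * ‖(m : B)‖ ≤ ‖pB (m : B)‖ := hlow _ m.2
    have h2 : ‖pB (m : B)‖ = 0 := by
      rw [← hqapp, hm]; simp
    have h3 : ‖(m : B)‖ = 0 := by
      have := norm_nonneg (m : B); linarith
    exact Subtype.ext (norm_eq_zero.mp h3)
  have hqsurj : Function.Surjective q :=
    (LinearMap.injective_iff_surjective_of_finrank_eq_finrank
      (by rw [hE'k, hEk])).mp hqinj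
  -- IsCompl E' F
  have hmemF : ∀ x : B, x ∈ F ↔ p x = 0 := fun x =>
    (Submodule.linearProjOfIsCompl_apply_eq_zero_iff h).symm
  have hdis : Disjoint E' F := by
    rw [Submodule.disjoint_def]
    intro x hxE' hxF
    have h1 : (1:ℝ)/2 * ‖x‖ ≤ ‖pB x‖ := hlow x hxE'
    have h2 : pB x = 0 := by
      rw [hpBapp, (hmemF x).mp hxF]; simp
    rw [h2, norm_zero] at h1
    have := norm_nonneg x
    have : ‖x‖ = 0 := by linarith
    exact norm_eq_zero.mp this
  have hcodis : Codisjoint E' F := by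
    rw [codisjoint_iff, eq_top_iff]
    intro b _
    obtain ⟨e'', he''⟩ := hqsurj (p b)
    have h1 : b - (e'' : B) ∈ F := by
      rw [hmemF]
      rw [map_sub]
      have : p (e'' : B) = p b := he''
      rw [this, sub_self]
    refine Submodule.mem_sup.mpr ⟨(e'' : B), e''.2, b - (e'' : B), h1, by abel⟩
  have h' : IsCompl E' F := ⟨hdis, hcodis⟩
  set p' : B →ₗ[ℝ] E' := E'.linearProjOfIsCompl F h' with hp'def
  set pB' : B →ₗ[ℝ] B := E'.subtype ∘ₗ p' with hpB'def
  have hpB'app : ∀ x : B, pB' x = (p' x : B) := fun x => rfl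
  have hkey : ∀ b : B, pB (pB' b) = pB b := by
    intro b
    have hbF : b - pB' b ∈ F := by
      have h2 : p' (b - pB' b) = 0 := by
        rw [map_sub, hpB'app, show p' ((p' b : E') : B) = p' b from Submodule.projectionOnto_apply_left h' (p' b), sub_self]
      exact (Submodule.linearProjOfIsCompl_apply_eq_zero_iff h').mp h2
    have h3 : p (b - pB' b) = 0 := (hmemF _).mp hbF
    have h4 : pB b = pB (pB' b) + pB (b - pB' b) := by
      rw [← map_add]; congr 1; abel
    have h5 : pB (b - pB' b) = 0 := by
      rw [hpBapp, h3]; rfl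
    rw [h4, h5, add_zero]
  have hub : ∀ b : B, ‖pB' b‖ ≤ 2 * ‖pB b‖ := by
    intro b
    have h1 : (1:ℝ)/2 * ‖pB' b‖ ≤ ‖pB (pB' b)‖ := by
      refine hlow _ ?_
      rw [hpB'app]; exact (p' b).2
    rw [hkey] at h1
    linarith
  have hub2 : ∀ b : B, ‖pB' b‖ ≤ 2 * C * ‖b‖ := by
    intro b
    have h1 := hπ b
    have h2 := hub b
    linarith
  -- the F-projection along E'
  set pFB : B →ₗ[ℝ] B := F.subtype ∘ₗ F.linearProjOfIsCompl E' h'.symm with hpFBdef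
  have hpFB : ∀ x : B, pFB x = x - pB' x := by
    intro x
    have h1 := Submodule.projection_add_projection_eq_self h' x
    have h2 : pB' x + pFB x = x := h1
    rw [eq_sub_iff_add_eq, add_comm]; exact h2
  have hF1 : ∀ v ∈ E, ‖v‖ = 1 → ‖pFB v‖ ≤ 4 * C * d := by
    intro v hv hv1
    obtain ⟨e', ⟨he'E', he'1⟩, hclose⟩ := nearE' v ⟨hv, hv1⟩
    have hpe' : pB' e' = e' := by
      rw [hpB'app, hp'def]
      rw [show e' = ((⟨e', he'E'⟩ : E') : B) from rfl]
      exact congrArg Subtype.val (Submodule.projectionOnto_apply_left h' ⟨e', he'E'⟩)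
    have hsplit : pFB v = (v - e') - pB' (v - e') := by
      rw [hpFB v]
      have h6 : pB' v = e' + pB' (v - e') := by
        conv_lhs => rw [show v = e' + (v - e') by abel]
        rw [map_add, hpe']
      rw [h6]; abel
    have h7 : ‖pFB v‖ ≤ ‖v - e'‖ + ‖pB' (v - e')‖ := by
      rw [hsplit]; exact norm_sub_le _ _
    have h8 : ‖pB' (v - e')‖ ≤ 2 * C * ‖v - e'‖ := hub2 _
    have h9 : 2 * C * ‖v - e'‖ ≤ 2 * C * d := by
      have := mul_le_mul_of_nonneg_left hclose (by linarith : (0:ℝ) ≤ 2 * C)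
      linarith
    have h10 : d + 2 * C * d ≤ 4 * C * d := by nlinarith
    linarith
  have hFle : ∀ v ∈ E, ‖pFB v‖ ≤ 4 * C * d * ‖v‖ := aux_scale_upper pFB E hF1
  refine ⟨h', ?_, ?_, ?_⟩
  · -- projNorm E' F h' ≤ 2C
    unfold BY.projNorm BY.projNormOn
    refine Real.sSup_le ?_ (by linarith)
    rintro r ⟨x, hx, rfl⟩
    show ‖(E'.linearProjOfIsCompl F h' x : B)‖ ≤ 2 * C
    have h3 : ‖x‖ ≤ 1 := by simpa [Metric.mem_closedBall, dist_eq_norm] using hx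
    have h4 : ‖pB' x‖ ≤ 2 * C * ‖x‖ := hub2 x
    have h5 : 2 * C * ‖x‖ ≤ 2 * C := mul_le_of_le_one_right (by linarith) h3
    exact le_trans h4 h5
  · -- projNormOn F E' ≤ 4Cd
    unfold BY.projNormOn
    refine Real.sSup_le ?_ (mul_nonneg (by linarith : (0:ℝ) ≤ 4 * C) hd0)
    rintro r ⟨x, ⟨hxE, hx1⟩, rfl⟩
    show ‖(F.linearProjOfIsCompl E' h'.symm x : B)‖ ≤ 4 * C * d
    have h4 : ‖pFB x‖ ≤ 4 * C * d * ‖x‖ := hFle x hxE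
    have h5 : 4 * C * d * ‖x‖ ≤ 4 * C * d := mul_le_of_le_one_right (mul_nonneg (by linarith) hd0) hx1
    exact le_trans h4 h5
  · intro e heE he1
    have h1 : ‖pFB e‖ ≤ 4 * C * d := by
      have h2 := hFle e heE
      rw [he1, mul_one] at h2
      exact h2
    have h3 : ‖e - pB' e‖ ≤ 4 * C * d := by rw [← hpFB e]; exact h1
    have hgoal : ‖(E'.linearProjOfIsCompl F h' e : B)‖ = ‖pB' e‖ := rfl
    rw [hgoal]
    constructor
    · have h4 : ‖e‖ - ‖pB' e‖ ≤ ‖e - pB' e‖ := norm_sub_norm_le e (pB' e)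
      rw [he1] at h4
      linarith
    · have h5 : ‖pB' e‖ - ‖e‖ ≤ ‖pB' e - e‖ := norm_sub_norm_le _ _
      rw [he1] at h5
      have h6 : ‖pB' e - e‖ = ‖e - pB' e‖ := by rw [← norm_neg]; congr 1; abel
      linarith
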